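/- Let k be an algebraically closed field of characteristic 2 and let a, c ∈ k[t] with a ≠ 0, deg a ≤ 1, and a·c' + c·a' = a². Then a divides c and there exists f ∈ k[t] with c = (t + f²)·a. -/

import Mathlib

open Polynomial

theorem sq_of_deriv_zero (k : Type*) [Field k] [IsAlgClosed k] [CharP k 2] (q : k[X])
    (hq : derivative q = 0) : ∃ g : k[X], q = g ^ 2 := by
  haveI : Fact (Nat.Prime 2) := ⟨Nat.prime_two⟩
  refine ⟨(q.contract 2).map (frobeniusEquiv k 2).symm.toRingHom, ?_⟩
  have h1 := map_frobenius_expand 2 ((q.contract 2).map (frobeniusEquiv k 2).symm.toRingHom)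
  rw [map_expand, map_map] at h1
  have h2 : (frobenius k 2).comp (frobeniusEquiv k 2).symm.toRingHom = RingHom.id k := by
    ext x; simp [frobenius_apply_frobeniusEquiv_symm]
  rw [h2, map_id, expand_contract 2 hq (by norm_num)] at h1
  exact h1

theorem stmt_2 (k : Type*) [Field k] [IsAlgClosed k] [CharP k 2]
    (a c : k[X]) (ha : a ≠ 0) (hdeg : a.degree ≤ 1)
    (h : a * derivative c + c * derivative a = a ^ 2) :
    a ∣ c ∧ ∃ f : k[X], c = (X + f ^ 2) * a := by
  have h2k : (2 : k) = 0 := by exact_mod_cast CharP.cast_eq_zero k 2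
  have h2 : (2 : k[X]) = 0 := by exact_mod_cast CharP.cast_eq_zero k[X] 2
  obtain ⟨u, v, huv⟩ := exists_eq_X_add_C_of_natDegree_le_one (natDegree_le_iff_degree_le.mpr hdeg)
  by_cases hu : u = 0
  · -- a is a nonzero constant
    subst hu
    simp only [map_zero, zero_mul, zero_add] at huv
    subst huv
    have hv : v ≠ 0 := fun hv => ha (by simp [hv])
    rw [derivative_C, mul_zero, add_zero] at h
    have hc' : derivative c = C v :=
      mul_left_cancel₀ (show (C v : k[X]) ≠ 0 by simpa using hv)
        (show C v * derivative c = C v * C v by rw [h]; ring)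
    have hd0 : derivative (c - C v * X) = 0 := by
      simp [hc']
    obtain ⟨g, hg⟩ := sq_of_deriv_zero k _ hd0
    obtain ⟨w, hw⟩ := IsAlgClosed.exists_pow_nat_eq (k := k) v⁻¹ (n := 2) (by norm_num)
    refine ⟨(isUnit_C.mpr (isUnit_iff_ne_zero.mpr hv)).dvd, ⟨g * C w, ?_⟩⟩
    have hwv : (C w : k[X]) ^ 2 * C v = 1 := by
      rw [← C_pow, hw, ← C_mul, inv_mul_cancel₀ hv, C_1]
    have hcv : c = C v * X + g ^ 2 := by linear_combination hg
    rw [hcv]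
    linear_combination -((g : k[X]) ^ 2) * hwv
  · -- a has degree 1
    have hdadC : derivative a = C u := by rw [huv]; simp
    set r : k := v / u with hr
    have hur : u * r = v := by rw [hr]; field_simp
    have har : a.eval r = 0 := by
      rw [huv]
      simp only [eval_add, eval_mul, eval_C, eval_X]
      rw [hur, ← two_mul, h2k, zero_mul]
    have hcr : c.eval r = 0 := by
      have := congrArg (Polynomial.eval r) h
      simp [har, hdadC] at this
      rcases this with h1 | h1
      · exact h1
      · exact absurd h1 hu
    have hXr : (X - C r) ∣ c := dvd_iff_isRoot.mpr hcr
    have haXr : a = C u * (X - C r) := by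
      rw [huv]
      have hCC : (C u : k[X]) * C r = C v := by rw [← C_mul, hur]
      linear_combination (C v : k[X]) * h2 + hCC
    have hadvd : a ∣ c := by
      obtain ⟨e, he⟩ := hXr
      refine ⟨C u⁻¹ * e, ?_⟩
      have hCuinv : (C u : k[X]) * C u⁻¹ = 1 := by
        rw [← C_mul, mul_inv_cancel₀ hu, C_1]
      rw [he, haXr]
      linear_combination -(((X : k[X]) - C r) * e) * hCuinv
    obtain ⟨d, hd⟩ := hadvd
    refine ⟨⟨d, hd⟩, ?_⟩
    have hdc : derivative c = derivative a * d + a * derivative d := by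
      rw [hd, derivative_mul]
    rw [hdc, hd] at h
    have hkey : a ^ 2 * derivative d = a ^ 2 := by
      calc a ^ 2 * derivative d
          = a * (derivative a * d + a * derivative d) + a * d * derivative a
            - 2 * (a * derivative a * d) := by ring
        _ = a ^ 2 := by rw [h, h2]; ring
    have hd' : derivative d = 1 :=
      mul_left_cancel₀ (pow_ne_zero 2 ha)
        (show a ^ 2 * derivative d = a ^ 2 * 1 by rw [mul_one, hkey])
    have hdX : derivative (d - X) = 0 := by simp [hd']
    obtain ⟨g, hg⟩ := sq_of_deriv_zero k _ hdX
    exact ⟨g, by rw [hd]; linear_combination a * hg⟩
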